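/- For every positive integer n and every k ≥ 0, if d_n(k) denotes the k-th digit (counting from 0 at the right) of the decimal representation of 5^n, then d_{n+1}(k) = 5·P(d_n(k)) + ⌊d_n(k−1)/2⌋, where P(x) = x mod 2 and d_n(−1) is taken to be 0 (i.e., for k = 0 the formula reads d_{n+1}(0) = 5·P(d_n(0))). -/

import Mathlib

/-- `d n k` is the k-th decimal digit (from the right, 0-indexed) of `5^n`. -/
def d (n k : ℕ) : ℕ := 5 ^ n / 10 ^ k % 10

theorem digit_recurrence (n k : ℕ) (hn : 0 < n) :
    d (n + 1) k = 5 * (d n k % 2) + (if k = 0 then 0 else d n (k - 1) / 2) := by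
  unfold d
  have hpow : (5:ℕ) ^ (n + 1) = 5 * 5 ^ n := by ring
  rcases k with _ | k
  · simp only [if_pos rfl, ite_true, pow_zero, Nat.div_one, hpow]
    generalize (5:ℕ) ^ n = a
    omega
  · simp only [Nat.succ_ne_zero, if_false, Nat.add_sub_cancel, hpow]
    set a := (5:ℕ) ^ n with ha
    set P := (10:ℕ) ^ k with hPdef
    have hP : 0 < P := pow_pos (by norm_num) k
    have h10 : (10:ℕ) ^ (k + 1) = P * 10 := by rw [hPdef]; ring
    rw [h10, ← Nat.div_div_eq_div_mul (5 * a) P 10, ← Nat.div_div_eq_div_mul a P 10]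
    -- key: (5*a)/P = 5*(a%P)/P + 5*(a/P), with 5*(a%P)/P ≤ 4
    have hsplit : 5 * a = 5 * (a % P) + 5 * (a / P) * P := by
      have := Nat.mod_add_div a P
      nlinarith [this]
    have hdiv : 5 * a / P = 5 * (a % P) / P + 5 * (a / P) := by
      rw [hsplit, Nat.add_mul_div_right _ _ hP]
    have he : 5 * (a % P) / P ≤ 4 := by
      have : 5 * (a % P) < 5 * P := by
        have := Nat.mod_lt a hP
        omega
      have := Nat.div_lt_of_lt_mul (by omega : 5 * (a % P) < P * 5)
      omega
    rw [hdiv]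
    generalize 5 * (a % P) / P = e at he
    generalize a / P = b
    omega
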